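/- Let τ(c) = c·Φ(c) + φ(c). Suppose μ, μ' ∈ ℝ, s, s' > 0, b ∈ ℝ with μ' ≥ b and s·τ((μ−b)/s) ≥ s'·τ((μ'−b)/s') (i.e., the EI at (μ,s) dominates EI at (μ',s')) and μ < b. Then |μ − b| ≤ √(2·log(s/s')) · s, provided s ≥ s'. -/

import Mathlib

open Real MeasureTheory ProbabilityTheory Set

/-- Standard normal PDF. -/
noncomputable def stdPdf (c : ℝ) : ℝ := (Real.sqrt (2 * Real.pi))⁻¹ * Real.exp (-c ^ 2 / 2)

/-- Standard normal CDF. -/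
noncomputable def stdCdf (c : ℝ) : ℝ := ∫ t in Set.Iic c, stdPdf t

/-- τ(c) = c·Φ(c) + φ(c). -/
noncomputable def tau (c : ℝ) : ℝ := c * stdCdf c + stdPdf c

lemma stdPdf_pos (c : ℝ) : 0 < stdPdf c := by
  have : 0 < Real.sqrt (2 * Real.pi) := Real.sqrt_pos.mpr (by positivity)
  exact mul_pos (inv_pos.mpr this) (Real.exp_pos _)

lemma stdPdf_cont : Continuous stdPdf := by
  unfold stdPdf; continuity

lemma stdPdf_integrable : Integrable stdPdf := by
  have h : Integrable fun x : ℝ => Real.exp (-(1/2 : ℝ) * x ^ 2) :=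
    integrable_exp_neg_mul_sq (by norm_num)
  have he : (fun c : ℝ => (Real.sqrt (2 * Real.pi))⁻¹ * Real.exp (-c ^ 2 / 2))
      = fun c : ℝ => (Real.sqrt (2 * Real.pi))⁻¹ * Real.exp (-(1/2 : ℝ) * c ^ 2) := by
    ext c; ring_nf
  unfold stdPdf
  rw [he]
  exact h.const_mul _

lemma stdCdf_eq (x : ℝ) : stdCdf x = stdCdf 0 + ∫ t in (0:ℝ)..x, stdPdf t := by
  unfold stdCdf
  rw [← intervalIntegral.integral_Iic_sub_Iic (stdPdf_integrable.integrableOn)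
    (stdPdf_integrable.integrableOn)]
  ring

lemma stdCdf_hasDeriv (c : ℝ) : HasDerivAt stdCdf (stdPdf c) c := by
  have h : HasDerivAt (fun x => ∫ t in (0:ℝ)..x, stdPdf t) (stdPdf c) c :=
    intervalIntegral.integral_hasDerivAt_right
      stdPdf_integrable.intervalIntegrable
      stdPdf_cont.aestronglyMeasurable.stronglyMeasurableAtFilter
      stdPdf_cont.continuousAt
  have := h.const_add (stdCdf 0)
  simpa [← stdCdf_eq] using this

lemma stdPdf_hasDeriv (c : ℝ) : HasDerivAt stdPdf (-c * stdPdf c) c := by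
  have h1 : HasDerivAt (fun x : ℝ => -x ^ 2 / 2) (-c) c := by
    have : HasDerivAt (fun x : ℝ => -x ^ 2 / 2) (-(2 * c ^ 1) / 2) c := by
      exact (((hasDerivAt_pow 2 c).neg).div_const 2)
    convert this using 1; simp; ring
  have h2 := (h1.exp).const_mul (Real.sqrt (2 * Real.pi))⁻¹
  unfold stdPdf
  convert h2 using 1
  exacts [rfl, rfl, by ring]

lemma stdCdf_nonneg (c : ℝ) : 0 ≤ stdCdf c :=
  MeasureTheory.setIntegral_nonneg measurableSet_Iic (fun t _ => (stdPdf_pos t).le)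

lemma tau_hasDeriv (c : ℝ) : HasDerivAt tau (stdCdf c) c := by
  have h1 : HasDerivAt (fun x => x * stdCdf x) (1 * stdCdf c + c * stdPdf c) c :=
    (hasDerivAt_id c).mul (stdCdf_hasDeriv c)
  have h := h1.add (stdPdf_hasDeriv c)
  have : 1 * stdCdf c + c * stdPdf c + -c * stdPdf c = stdCdf c := by ring
  rw [this] at h
  exact h

lemma tau_mono : Monotone tau := by
  have hdiff : ∀ x : ℝ, HasDerivAt tau (stdCdf x) x := tau_hasDeriv
  apply monotone_of_deriv_nonneg
  · exact fun x => (hdiff x).differentiableAt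
  · intro x
    rw [(hdiff x).deriv]
    exact stdCdf_nonneg x

lemma tau_zero : tau 0 = (Real.sqrt (2 * Real.pi))⁻¹ := by
  unfold tau stdPdf
  norm_num

lemma tau_le_pdf {c : ℝ} (hc : c ≤ 0) : tau c ≤ stdPdf c := by
  unfold tau
  nlinarith [stdCdf_nonneg c]

theorem ei_mean_gap_bound (μ μ' s s' b : ℝ)
    (hs : 0 < s) (hs' : 0 < s') (hμ' : μ' ≥ b)
    (hdom : s * tau ((μ - b) / s) ≥ s' * tau ((μ' - b) / s'))
    (hμ : μ < b) (hss' : s ≥ s') :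
    |μ - b| ≤ Real.sqrt (2 * Real.log (s / s')) * s := by
  set c : ℝ := (μ - b) / s with hc
  have hcneg : c ≤ 0 := div_nonpos_iff.mpr (Or.inr ⟨by linarith, hs.le⟩)
  have hc' : (0:ℝ) ≤ (μ' - b) / s' := div_nonneg (by linarith) hs'.le
  have hsqrt : 0 < Real.sqrt (2 * Real.pi) := Real.sqrt_pos.mpr (by positivity)
  -- s' * τ(0) ≤ s' * τ(c') ≤ s * τ(c) ≤ s * φ(c)
  have h1 : s' * tau 0 ≤ s' * tau ((μ' - b) / s') :=
    mul_le_mul_of_nonneg_left (tau_mono hc') hs'.le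
  have h2 : s * tau c ≤ s * stdPdf c :=
    mul_le_mul_of_nonneg_left (tau_le_pdf hcneg) hs.le
  have key : s' * (Real.sqrt (2 * Real.pi))⁻¹ ≤
      s * ((Real.sqrt (2 * Real.pi))⁻¹ * Real.exp (-c ^ 2 / 2)) := by
    have : s' * tau 0 ≤ s * stdPdf c :=
      le_trans h1 (le_trans hdom h2)
    rwa [tau_zero, stdPdf] at this
  -- s' ≤ s * exp(-c²/2)
  have h3 : s' ≤ s * Real.exp (-c ^ 2 / 2) := by
    have := mul_le_mul_of_nonneg_right key hsqrt.le
    rw [mul_assoc, mul_assoc] at this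
    rw [mul_comm ((Real.sqrt (2 * Real.pi))⁻¹ * Real.exp (-c ^ 2 / 2)) _] at this
    nlinarith [inv_mul_cancel₀ hsqrt.ne', Real.exp_pos (-c^2/2)]
  -- exp(c²/2) ≤ s/s'
  have h4 : Real.exp (c ^ 2 / 2) ≤ s / s' := by
    rw [le_div_iff₀ hs']
    have hepos := Real.exp_pos (-c ^ 2 / 2)
    have : Real.exp (c ^ 2 / 2) * Real.exp (-c ^ 2 / 2) = 1 := by
      rw [← Real.exp_add]; ring_nf; exact Real.exp_zero
    nlinarith
  have h5 : c ^ 2 / 2 ≤ Real.log (s / s') := by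
    rw [← Real.log_exp (c ^ 2 / 2)]
    exact Real.log_le_log (Real.exp_pos _) h4
  have h6 : c ^ 2 ≤ 2 * Real.log (s / s') := by linarith
  have h7 : |c| ≤ Real.sqrt (2 * Real.log (s / s')) := by
    rw [← Real.sqrt_sq_eq_abs]
    exact Real.sqrt_le_sqrt h6
  have h8 : |μ - b| = |c| * s := by
    rw [hc, abs_div, abs_of_pos hs, div_mul_cancel₀ _ hs.ne']
  rw [h8]
  exact mul_le_mul_of_nonneg_right h7 hs.le
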